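/- If a network N_i is obtained from a network N_{i-1} by an SNPR+ operation, then every tree displayed by N_{i-1} is also displayed by N_i, i.e., D(N_{i-1}) ⊆ D(N_i). -/
import Mathlib


/-- A rooted binary phylogenetic network on label set `X`:
vertices are `Fin n`, edges a multiset of directed edges (parallel edges allowed),
a root vertex, and a labelling of (intended) leaves by `X`. -/
structure Net (X : Type) where
  n : ℕ
  edges : Multiset (Fin n × Fin n)
  root : Fin n
  lab : X → Fin n

namespace Net

variable {X : Type}

def indeg (N : Net X) (v : Fin N.n) : ℕ := Multiset.card (N.edges.filter fun e => e.2 = v)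

def outdeg (N : Net X) (v : Fin N.n) : ℕ := Multiset.card (N.edges.filter fun e => e.1 = v)

def adj (N : Net X) (u v : Fin N.n) : Prop := (u, v) ∈ N.edges

def isLeaf (N : Net X) (v : Fin N.n) : Prop := N.indeg v = 1 ∧ N.outdeg v = 0

def isRetic (N : Net X) (v : Fin N.n) : Prop := N.indeg v = 2 ∧ N.outdeg v = 1

def isInnerTree (N : Net X) (v : Fin N.n) : Prop := N.indeg v = 1 ∧ N.outdeg v = 2

/-- Well-formedness: a rooted binary phylogenetic network with pendant root,
leaves bijectively labelled by `X`, and acyclic. -/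
def WellFormed (N : Net X) : Prop :=
  N.indeg N.root = 0 ∧ N.outdeg N.root = 1 ∧
  (∀ v, v = N.root ∨ N.isLeaf v ∨ N.isInnerTree v ∨ N.isRetic v) ∧
  Function.Injective N.lab ∧
  (∀ v, N.isLeaf v ↔ ∃ x, N.lab x = v) ∧
  (∀ v, ¬ Relation.TransGen N.adj v v)

/-- The number of reticulations of `N`. -/
def reticCount (N : Net X) : ℕ :=
  Finset.card (Finset.univ.filter fun v : Fin N.n => N.indeg v = 2 ∧ N.outdeg v = 1)

/-- A rooted binary phylogenetic tree: a well-formed network with no reticulations. -/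
def IsTree (N : Net X) : Prop := N.WellFormed ∧ N.reticCount = 0

/-- Isomorphism of labelled networks. -/
def Iso (N M : Net X) : Prop :=
  ∃ f : Fin N.n ≃ Fin M.n,
    N.edges.map (fun e => (f e.1, f e.2)) = M.edges ∧
    f N.root = M.root ∧ ∀ x, f (N.lab x) = M.lab x

/-- `S` is obtained from `T` by subdividing one edge with a single new vertex. -/
def subdivideOnce (T S : Net X) : Prop :=
  ∃ e ∈ T.edges, Iso S
    { n := T.n + 1
      edges := ((T.edges.erase e).map fun p => (Fin.castSucc p.1, Fin.castSucc p.2)) +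
        {(Fin.castSucc e.1, Fin.last T.n), (Fin.last T.n, Fin.castSucc e.2)}
      root := Fin.castSucc T.root
      lab := fun x => Fin.castSucc (T.lab x) }

/-- `S` is a subdivision of `T`. -/
def Subdivision (T S : Net X) : Prop := Relation.ReflTransGen subdivideOnce T S

/-- `N` displays `T`: some subdivision of `T` is a subgraph of `N`
(respecting root and labels). -/
def Displays (N T : Net X) : Prop :=
  ∃ S : Net X, Subdivision T S ∧
    ∃ f : Fin S.n → Fin N.n, Function.Injective f ∧
      S.edges.map (fun e => (f e.1, f e.2)) ≤ N.edges ∧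
      f S.root = N.root ∧ ∀ x, f (S.lab x) = N.lab x

/-- The edge multiset after pruning edge `(u,v)` at tree vertex `u` with parent `p`
and other child `c` (delete `(u,v)`, suppress `u`). -/
def prunedAt (N : Net X) (u v p c : Fin N.n) : Multiset (Fin N.n × Fin N.n) :=
  (((N.edges.erase (u, v)).erase (p, u)).erase (u, c)) + {(p, c)}

/-- SNPR⁰: prune the edge `(u,v)` (where `u` is a non-root tree vertex), suppress `u`,
subdivide an edge `(x,y)` that is not a descendant of `v` with the (re-used) vertex `u`,
and add the edge `(u,v)` back. -/
def SNPRzero (N N' : Net X) : Prop :=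
  ∃ u v p c x y : Fin N.n,
    N.isInnerTree u ∧ u ≠ N.root ∧
    (u, v) ∈ N.edges ∧ (p, u) ∈ N.edges.erase (u, v) ∧
    (u, c) ∈ (N.edges.erase (u, v)).erase (p, u) ∧
    (x, y) ∈ N.prunedAt u v p c ∧
    ¬ Relation.ReflTransGen (fun a b => (a, b) ∈ N.prunedAt u v p c) v x ∧
    ∃ g : Fin N'.n ≃ Fin N.n,
      N'.edges.map (fun e => (g e.1, g e.2)) =
        ((N.prunedAt u v p c).erase (x, y)) + {(x, u), (u, y), (u, v)} ∧
      g N'.root = N.root ∧ ∀ z, g (N'.lab z) = N.lab z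

/-- SNPR⁻: delete a reticulation edge `(u,v)` (with `u` a tree vertex and `v` a
reticulation) and suppress `u` and `v`. -/
def SNPRminus (N N' : Net X) : Prop :=
  ∃ u v p c q d : Fin N.n,
    N.isInnerTree u ∧ N.isRetic v ∧
    (u, v) ∈ N.edges ∧ (p, u) ∈ N.edges.erase (u, v) ∧
    (u, c) ∈ (N.edges.erase (u, v)).erase (p, u) ∧
    (q, v) ∈ ((N.edges.erase (u, v)).erase (p, u)).erase (u, c) ∧
    (v, d) ∈ (((N.edges.erase (u, v)).erase (p, u)).erase (u, c)).erase (q, v) ∧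
    ∃ g : Fin N'.n → Fin N.n, Function.Injective g ∧
      (∀ w, (w ≠ u ∧ w ≠ v) ↔ ∃ i, g i = w) ∧
      N'.edges.map (fun e => (g e.1, g e.2)) =
        (((((N.edges.erase (u, v)).erase (p, u)).erase (u, c)).erase (q, v)).erase (v, d))
          + {(p, c), (q, d)} ∧
      g N'.root = N.root ∧ ∀ z, g (N'.lab z) = N.lab z

/-- SNPR⁺ is the reversal of SNPR⁻: subdivide an edge with `v'`, subdivide a
non-descendant edge with `u'`, and add the new reticulation edge `(u',v')`. -/
def SNPRplus (N N' : Net X) : Prop := SNPRminus N' N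

/-- A single SNPR operation. -/
def SNPRstep (N N' : Net X) : Prop := SNPRzero N N' ∨ SNPRminus N N' ∨ SNPRplus N N'

/-- There is an SNPR-sequence of length `k` from `N` to `N'` all of whose networks
lie in the class `C`. -/
def seqIn (C : Net X → Prop) (N N' : Net X) (k : ℕ) : Prop :=
  ∃ f : ℕ → Net X, f 0 = N ∧ Iso (f k) N' ∧ (∀ i ≤ k, C (f i)) ∧
    ∀ i < k, SNPRstep (f i) (f (i + 1))

/-- The SNPR-distance within the class `C`. -/
noncomputable def dIn (C : Net X → Prop) (N N' : Net X) : ℕ := sInf {k | seqIn C N N' k}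

/-- The SNPR-distance in the class of all (well-formed) networks. -/
noncomputable def dSNPR (N N' : Net X) : ℕ := dIn WellFormed N N'

/-- The rSPR-distance between trees: SNPR-sequences staying inside the class of
trees; on trees only SNPR⁰ (= rSPR) moves are possible. -/
noncomputable def drSPR (T T' : Net X) : ℕ := dIn IsTree T T'

/-- Tree-child: every non-leaf vertex has a child that is not a reticulation. -/
def TreeChild (N : Net X) : Prop :=
  ∀ v : Fin N.n, 1 ≤ N.outdeg v → ∃ w, (v, w) ∈ N.edges ∧ ¬ N.isRetic w

/-- `v` is visible: some leaf is such that every directed path from the root to that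
leaf passes through `v`. -/
def Visible (N : Net X) (v : Fin N.n) : Prop :=
  ∃ x : X, ∀ l : List (Fin N.n), l.Chain' N.adj →
    l.head? = some N.root → l.getLast? = some (N.lab x) → v ∈ l

/-- Reticulation-visible network. -/
def ReticVisible (N : Net X) : Prop := ∀ v, N.isRetic v → N.Visible v

/-- Tree-based: some tree has an embedding into `N` covering every vertex of `N`. -/
def TreeBased (N : Net X) : Prop :=
  ∃ T : Net X, T.IsTree ∧ ∃ S : Net X, Subdivision T S ∧
    ∃ f : Fin S.n → Fin N.n, Function.Bijective f ∧
      S.edges.map (fun e => (f e.1, f e.2)) ≤ N.edges ∧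
      f S.root = N.root ∧ ∀ x, f (S.lab x) = N.lab x

/-- `N` has a pair of parallel edges. -/
def HasParallel (N : Net X) : Prop := ∃ e, 2 ≤ N.edges.count e

/-! ### Agreement forests -/

/-- Well-formedness of a component of an agreement forest: a rooted binary tree
whose leaves are exactly the labelled vertices (a label may also sit at the root). -/
def WFComp {α : Type} (C : Net α) : Prop :=
  Function.Injective C.lab ∧
  (∀ v, ¬ Relation.TransGen C.adj v v) ∧
  Multiset.card C.edges + 1 = C.n ∧
  C.indeg C.root = 0 ∧ (∀ v, v ≠ C.root → C.indeg v = 1) ∧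
  (∀ v, C.outdeg v ≤ 2) ∧
  (∀ v, C.outdeg v = 0 → ∃ a, C.lab a = v) ∧
  (∀ a, C.outdeg (C.lab a) = 0 ∨ C.lab a = C.root)

/-- An embedding of a forest component `C`, labelled over a subset `s` of
`X ∪ {ρ}` (with `none` playing the role of the root label `ρ`), into a host
network `H`, using exactly the edge multiset `E` of `H`. -/
def CompEmbed {s : Finset (Option X)} (C : Net {a : Option X // a ∈ s})
    (H : Net X) (E : Multiset (Fin H.n × Fin H.n)) : Prop :=
  ∃ S, Subdivision C S ∧ ∃ f : Fin S.n → Fin H.n, Function.Injective f ∧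
    S.edges.map (fun e => (f e.1, f e.2)) = E ∧
    ∀ a : {a : Option X // a ∈ s}, f (S.lab a) = Option.elim a.1 H.root H.lab

/-- `E` is the edge multiset of a directed path (the image of a subdivided single
disagreement edge) in `H`. -/
def IsDipath (H : Net X) (E : Multiset (Fin H.n × Fin H.n)) : Prop :=
  ∃ l : List (Fin H.n), l.Nodup ∧ 2 ≤ l.length ∧ E = ↑(l.zip l.tail)

/-- An agreement forest for a tree `T` and a network `N` on `X`:
tree components `T_ρ = comp 0, T_1, …, T_k` on blocks partitioning `X ∪ {ρ}`
together with `r = reticCount N` disagreement edges, admitting simultaneous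
edge-disjoint embeddings into `T` covering all edges of `T`, and (together with
the disagreement edges) into `N` covering all edges of `N`. -/
structure AF (T N : Net X) where
  k : ℕ
  r : ℕ
  blocks : Fin (k + 1) → Finset (Option X)
  comp : (i : Fin (k + 1)) → Net {a : Option X // a ∈ blocks i}
  compWF : ∀ i, WFComp (comp i)
  rhoBlock : (none : Option X) ∈ blocks 0
  rhoRoot : (comp 0).lab ⟨none, rhoBlock⟩ = (comp 0).root
  partition : ∀ a : Option X, ∃! i, a ∈ blocks i
  reticEq : r = N.reticCount
  embT : ∃ E : Fin (k + 1) → Multiset (Fin T.n × Fin T.n),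
    (∀ i, CompEmbed (comp i) T (E i)) ∧ (∑ i, E i) = T.edges
  embN : ∃ (E : Fin (k + 1) → Multiset (Fin N.n × Fin N.n))
      (P : Fin r → Multiset (Fin N.n × Fin N.n)),
    (∀ i, CompEmbed (comp i) N (E i)) ∧ (∀ j, IsDipath N (P j)) ∧
    (∑ i, E i) + (∑ j, P j) = N.edges

/-- `m(T,N)`: the size minus one, `k + r`, of a maximum agreement forest. -/
noncomputable def mAF (T N : Net X) : ℕ := sInf {m | ∃ F : AF T N, F.k + F.r = m}

end Net

namespace Net

/-- Key step: if an embedded subdivision uses a "virtual" edge `(a,b)`, subdivide it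
once more and route the new vertex through a fresh host vertex `w`. -/
lemma snoc_step {X : Type} {m : ℕ} (S : Net X) (f : Fin S.n → Fin m)
    (hf : Function.Injective f) (B : Multiset (Fin m × Fin m)) (a b w : Fin m)
    (hw : ∀ i, f i ≠ w)
    (hle : S.edges.map (fun e => (f e.1, f e.2)) ≤ B + {(a, b)}) :
    ∃ S' : Net X, Relation.ReflTransGen subdivideOnce S S' ∧
      ∃ f' : Fin S'.n → Fin m, Function.Injective f' ∧
        S'.edges.map (fun e => (f' e.1, f' e.2)) ≤ B + {(a, w), (w, b)} ∧
        f' S'.root = f S.root ∧ (∀ x, f' (S'.lab x) = f (S.lab x)) ∧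
        ∀ i, (∃ j, f' i = f j) ∨ f' i = w := by
  classical
  set F : Fin S.n × Fin S.n → Fin m × Fin m := fun e => (f e.1, f e.2) with hF
  have hFinj : Function.Injective F := by
    intro x y hxy
    have h1 := congrArg Prod.fst hxy
    have h2 := congrArg Prod.snd hxy
    exact Prod.ext (hf h1) (hf h2)
  by_cases hB : S.edges.map F ≤ B
  · refine ⟨S, Relation.ReflTransGen.refl, f, hf, ?_, rfl, fun x => rfl,
      fun i => Or.inl ⟨i, rfl⟩⟩
    exact le_add_right hB
  · -- (a,b) must occur in the image
    have hmem : (a, b) ∈ S.edges.map F := by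
      by_contra hmem
      apply hB
      rw [Multiset.le_iff_count] at hle ⊢
      intro x
      have hx := hle x
      by_cases hxe : x = (a, b)
      · subst hxe
        simp [Multiset.count_eq_zero_of_notMem hmem]
      · have : Multiset.count x ({(a, b)} : Multiset (Fin m × Fin m)) = 0 := by
          simp [Multiset.count_singleton, hxe]
        rw [Multiset.count_add, this] at hx
        omega
    obtain ⟨e, he, hfe⟩ := Multiset.mem_map.1 hmem
    refine ⟨{ n := S.n + 1
              edges := ((S.edges.erase e).map fun p => (Fin.castSucc p.1, Fin.castSucc p.2)) +
                {(Fin.castSucc e.1, Fin.last S.n), (Fin.last S.n, Fin.castSucc e.2)}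
              root := Fin.castSucc S.root
              lab := fun x => Fin.castSucc (S.lab x) }, ?_, ?_⟩
    · exact Relation.ReflTransGen.single ⟨e, he, Equiv.refl _, by simp, rfl, fun x => rfl⟩
    · refine ⟨Fin.snoc f w, ?_, ?_, ?_, ?_, ?_⟩
      · intro i j hij
        induction i using Fin.lastCases with
        | last =>
          induction j using Fin.lastCases with
          | last => rfl
          | cast j =>
            rw [Fin.snoc_last, Fin.snoc_castSucc] at hij
            exact absurd hij.symm (hw j)
        | cast i =>
          induction j using Fin.lastCases with
          | last =>
            rw [Fin.snoc_last, Fin.snoc_castSucc] at hij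
            exact absurd hij (hw i)
          | cast j =>
            rw [Fin.snoc_castSucc, Fin.snoc_castSucc] at hij
            exact congrArg Fin.castSucc (hf hij)
      · show Multiset.map _ (((S.edges.erase e).map _) + _) ≤ _
        rw [Multiset.map_add, Multiset.map_map]
        have hcomp : ((fun q : Fin (S.n+1) × Fin (S.n+1) =>
              ((Fin.snoc f w : Fin (S.n+1) → Fin m) q.1,
               (Fin.snoc f w : Fin (S.n+1) → Fin m) q.2)) ∘
            (fun p : Fin S.n × Fin S.n => (Fin.castSucc p.1, Fin.castSucc p.2))) = F := by
          funext p
          simp [hF, Function.comp, Fin.snoc_castSucc]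
        rw [hcomp]
        have herase : (S.edges.erase e).map F = (S.edges.map F).erase (a, b) := by
          rw [Multiset.map_erase F hFinj, hfe]
        rw [herase]
        have h1 : (S.edges.map F).erase (a, b) ≤ B := by
          calc (S.edges.map F).erase (a, b) ≤ (B + {(a, b)}).erase (a, b) :=
            Multiset.erase_le_erase _ hle
          _ = B := by
            rw [add_comm, Multiset.singleton_add, Multiset.erase_cons_head]
        have h2 : (Multiset.map (fun q : Fin (S.n+1) × Fin (S.n+1) =>
            ((Fin.snoc f w : Fin (S.n+1) → Fin m) q.1,
             (Fin.snoc f w : Fin (S.n+1) → Fin m) q.2))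
            {(Fin.castSucc e.1, Fin.last S.n), (Fin.last S.n, Fin.castSucc e.2)}) =
            {(a, w), (w, b)} := by
          have ha : f e.1 = a := congrArg Prod.fst hfe
          have hb : f e.2 = b := congrArg Prod.snd hfe
          simp [Fin.snoc_castSucc, Fin.snoc_last, ha, hb]
        rw [h2]
        exact add_le_add h1 le_rfl
      · exact @Fin.snoc_castSucc S.n (fun _ => Fin m) w f S.root
      · intro x
        exact @Fin.snoc_castSucc S.n (fun _ => Fin m) w f (S.lab x)
      · intro i
        induction i using Fin.lastCases with
        | last => exact Or.inr (Fin.snoc_last _ _)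
        | cast i => exact Or.inl ⟨i, Fin.snoc_castSucc _ _ _⟩

end Net


open Net in
/-- If `N'` is obtained from `N` by an SNPR⁺ operation, then every tree displayed
by `N` is also displayed by `N'`, i.e. `D(N) ⊆ D(N')`. -/
theorem displays_mono_of_SNPRplus {X : Type} (N N' : Net X)
    (hN : N.WellFormed) (hN' : N'.WellFormed) (hstep : SNPRplus N N') :
    ∀ T : Net X, T.IsTree → N.Displays T → N'.Displays T := by
  classical
  intro T _hT hD
  obtain ⟨u, v, p, c, q, d, hu, hv, h1, h2, h3, h4, h5, g, hginj, himg, hmap, hgroot, hglab⟩ :=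
    hstep
  obtain ⟨S, hsub, f, hfinj, hle, hroot, hlab⟩ := hD
  set A := (((((N'.edges.erase (u, v)).erase (p, u)).erase (u, c)).erase (q, v)).erase (v, d))
    with hA
  have huv : u ≠ v := by
    intro h
    rw [h] at hu
    have e1 := hu.1
    have e2 := hv.1
    rw [e1] at e2
    omega
  have hgu : ∀ i : Fin N.n, g i ≠ u := fun i h => (((himg u).2 ⟨i, h⟩).1) rfl
  have hgv : ∀ i : Fin N.n, g i ≠ v := fun i h => (((himg v).2 ⟨i, h⟩).2) rfl
  set h0 : Fin S.n → Fin N'.n := g ∘ f with hh0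
  have h0inj : Function.Injective h0 := hginj.comp hfinj
  have hle0 : S.edges.map (fun e => (h0 e.1, h0 e.2)) ≤ (A + {(q, d)}) + {(p, c)} := by
    have heq : S.edges.map (fun e => (h0 e.1, h0 e.2)) =
        (S.edges.map (fun e => (f e.1, f e.2))).map (fun e => (g e.1, g e.2)) := by
      rw [Multiset.map_map]
      rfl
    rw [heq]
    have h' := Multiset.map_le_map (f := fun e : Fin N.n × Fin N.n => (g e.1, g e.2)) hle
    rw [hmap] at h'
    refine le_trans h' (le_of_eq ?_)
    simp only [Multiset.insert_eq_cons, ← Multiset.singleton_add]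
    abel
  obtain ⟨S1, hS1, f1, hf1, hle1, hroot1, hlab1, hran1⟩ :=
    snoc_step S h0 h0inj (A + {(q, d)}) p c u (fun i => hgu (f i)) hle0
  have hle1' : S1.edges.map (fun e => (f1 e.1, f1 e.2)) ≤
      (A + {(p, u), (u, c)}) + {(q, d)} := by
    refine le_trans hle1 (le_of_eq ?_)
    simp only [Multiset.insert_eq_cons, ← Multiset.singleton_add]
    abel
  have hwv1 : ∀ i, f1 i ≠ v := by
    intro i
    rcases hran1 i with ⟨j, hj⟩ | hj
    · rw [hj]; exact hgv (f j)
    · rw [hj]; exact huv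
  obtain ⟨S2, hS2, f2, hf2, hle2, hroot2, hlab2, _hran2⟩ :=
    snoc_step S1 f1 hf1 (A + {(p, u), (u, c)}) q d v hwv1 hle1'
  have hNdecomp : (u, v) ::ₘ (p, u) ::ₘ (u, c) ::ₘ (q, v) ::ₘ (v, d) ::ₘ A = N'.edges := by
    rw [hA, Multiset.cons_erase h5, Multiset.cons_erase h4, Multiset.cons_erase h3,
      Multiset.cons_erase h2, Multiset.cons_erase h1]
  have hfin : (A + {(p, u), (u, c)}) + {(q, v), (v, d)} ≤ N'.edges := by
    rw [← hNdecomp]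
    refine Multiset.le_iff_exists_add.2 ⟨{(u, v)}, ?_⟩
    simp only [Multiset.insert_eq_cons, ← Multiset.singleton_add]
    abel
  refine ⟨S2, hsub.trans (hS1.trans hS2), f2, hf2, le_trans hle2 hfin, ?_, ?_⟩
  · rw [hroot2, hroot1, hh0]
    show g (f S.root) = N'.root
    rw [hroot, hgroot]
  · intro x
    rw [hlab2 x, hlab1 x, hh0]
    show g (f (S.lab x)) = N'.lab x
    rw [hlab x, hglab x]
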